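/- A mapping h : Σ^{++} → Γ^{++} is a two-dimensional morphism if and only if there exists a uniform substitution g : Σ → Γ^{++} such that h = g_{⊖,⦶} = g_{⦶,⊖}. -/

import Mathlib

/-- A nonempty rectangular two-dimensional word (array) over `σ`. -/
structure Arr (σ : Type) : Type where
  rows : ℕ
  cols : ℕ
  rows_pos : 0 < rows
  cols_pos : 0 < cols
  entry : Fin rows → Fin cols → σ

namespace Arr

variable {σ γ : Type}

/-- Column concatenation: place `V` to the right of `U`; `none` if heights differ. -/
def colCat (U V : Arr σ) : Option (Arr σ) :=
  if h : U.rows = V.rows then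
    some { rows := U.rows
           cols := U.cols + V.cols
           rows_pos := U.rows_pos
           cols_pos := by have := U.cols_pos; omega
           entry := fun i j =>
             if hj : (j : ℕ) < U.cols then U.entry i ⟨j, hj⟩
             else V.entry (Fin.cast h i) ⟨(j : ℕ) - U.cols, by have := j.isLt; omega⟩ }
  else none

/-- Row concatenation: place `V` below `U`; `none` if widths differ. -/
def rowCat (U V : Arr σ) : Option (Arr σ) :=
  if h : U.cols = V.cols then
    some { rows := U.rows + V.rows
           cols := U.cols
           rows_pos := by have := U.rows_pos; omega
           cols_pos := U.cols_pos
           entry := fun i j =>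
             if hi : (i : ℕ) < U.rows then U.entry ⟨i, hi⟩ j
             else V.entry ⟨(i : ℕ) - U.rows, by have := i.isLt; omega⟩ (Fin.cast h j) }
  else none

/-- A two-dimensional morphism: compatible with both concatenations,
with "both sides undefined" counting as equal. -/
def IsMorphism (h : Arr σ → Arr γ) : Prop :=
  (∀ V W : Arr σ, Option.map h (colCat V W) = colCat (h V) (h W)) ∧
  (∀ V W : Arr σ, Option.map h (rowCat V W) = rowCat (h V) (h W))

/-- Concatenate a nonempty list of (possibly undefined) arrays with the
given partial concatenation operation; `none` on the empty list. -/
def catListO (op : Arr σ → Arr σ → Option (Arr σ)) : List (Option (Arr σ)) → Option (Arr σ)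
  | [] => none
  | [a] => a
  | a :: b :: rest => a.bind fun x => (catListO op (b :: rest)).bind fun y => op x y

/-- `g_{⦶,⊖}`: substitute and assemble, first column-concatenating each row,
then row-concatenating the rows. -/
def subCR {X : Type} (g : X → Arr σ) (α : Arr X) : Option (Arr σ) :=
  catListO rowCat (List.ofFn fun i : Fin α.rows =>
    catListO colCat (List.ofFn fun j : Fin α.cols => some (g (α.entry i j))))

/-- `g_{⊖,⦶}`: substitute and assemble, first row-concatenating each column,
then column-concatenating the columns. -/
def subRC {X : Type} (g : X → Arr σ) (α : Arr X) : Option (Arr σ) :=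
  catListO colCat (List.ofFn fun j : Fin α.cols =>
    catListO rowCat (List.ofFn fun i : Fin α.rows => some (g (α.entry i j))))

/-- A substitution is uniform if all images have the same dimensions. -/
def Uniform {X : Type} (g : X → Arr σ) : Prop :=
  ∃ m n : ℕ, ∀ x : X, (g x).rows = m ∧ (g x).cols = n

end Arr

open Arr

/-- The five modes of array pattern languages. -/
inductive Mode | h | p | r | c | rc
deriving DecidableEq

/-- The array pattern language of an array pattern (an array over the
variables `ℕ`) in each mode. -/
def langOf (σ : Type) : Mode → Arr ℕ → Set (Arr σ)
  | Mode.h, α => {W | ∃ g : Arr ℕ → Arr σ, IsMorphism g ∧ g α = W}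
  | Mode.p, α => {W | ∃ s : ℕ → Arr σ, subCR s α = some W ∧ subRC s α = some W}
  | Mode.r, α => {W | ∃ s : ℕ → Arr σ, subCR s α = some W}
  | Mode.c, α => {W | ∃ s : ℕ → Arr σ, subRC s α = some W}
  | Mode.rc, α =>
      {W | ∃ s : ℕ → Arr σ, subCR s α = some W} ∪ {W | ∃ s : ℕ → Arr σ, subRC s α = some W}

namespace ArrAux

open Arr

variable {σ γ : Type}

theorem ext2 {U V : Arr γ} (hr : U.rows = V.rows) (hc : U.cols = V.cols)
    (he : ∀ (i j : ℕ) (hi : i < U.rows) (hj : j < U.cols),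
      U.entry ⟨i, hi⟩ ⟨j, hj⟩ = V.entry ⟨i, hr ▸ hi⟩ ⟨j, hc ▸ hj⟩) : U = V := by
  obtain ⟨r, c, pr, pc, e⟩ := U
  obtain ⟨r', c', pr', pc', e'⟩ := V
  dsimp at hr hc
  subst hr; subst hc
  simp only [Arr.mk.injEq, heq_eq_eq, true_and]
  funext i j
  have := he i j i.isLt j.isLt
  simpa using this

theorem entry_congr {U V : Arr γ} (h : U = V) {i : Fin U.rows} {i' : Fin V.rows}
    {j : Fin U.cols} {j' : Fin V.cols} (hi : (i : ℕ) = (i' : ℕ)) (hj : (j : ℕ) = (j' : ℕ)) :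
    U.entry i j = V.entry i' j' := by
  subst h
  obtain rfl : i = i' := Fin.ext hi
  obtain rfl : j = j' := Fin.ext hj
  rfl

/-- The `(m,n)`-blow-up of an array under a uniform substitution. -/
def blow (g : σ → Arr γ) (m n : ℕ) (hg : ∀ x, (g x).rows = m ∧ (g x).cols = n)
    (hm : 0 < m) (hn : 0 < n) (U : Arr σ) : Arr γ where
  rows := U.rows * m
  cols := U.cols * n
  rows_pos := Nat.mul_pos U.rows_pos hm
  cols_pos := Nat.mul_pos U.cols_pos hn
  entry i j :=
    (g (U.entry ⟨(i : ℕ) / m, (Nat.div_lt_iff_lt_mul hm).mpr i.isLt⟩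
        ⟨(j : ℕ) / n, (Nat.div_lt_iff_lt_mul hn).mpr j.isLt⟩)).entry
      ⟨(i : ℕ) % m, by rw [(hg _).1]; exact Nat.mod_lt _ hm⟩
      ⟨(j : ℕ) % n, by rw [(hg _).2]; exact Nat.mod_lt _ hn⟩

theorem blow_entry (g : σ → Arr γ) (m n : ℕ) (hg : ∀ x, (g x).rows = m ∧ (g x).cols = n)
    (hm : 0 < m) (hn : 0 < n) (U : Arr σ) (i : Fin (U.rows * m)) (j : Fin (U.cols * n)) :
    (blow g m n hg hm hn U).entry i j =
    (g (U.entry ⟨(i : ℕ) / m, (Nat.div_lt_iff_lt_mul hm).mpr i.isLt⟩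
        ⟨(j : ℕ) / n, (Nat.div_lt_iff_lt_mul hn).mpr j.isLt⟩)).entry
      ⟨(i : ℕ) % m, by rw [(hg _).1]; exact Nat.mod_lt _ hm⟩
      ⟨(j : ℕ) % n, by rw [(hg _).2]; exact Nat.mod_lt _ hn⟩ := rfl

/-- Horizontal concatenation of a uniform family of arrays. -/
def hcatArr (m n : ℕ) {k : ℕ} (hk : 0 < k) (hm : 0 < m) (hn : 0 < n)
    (f : Fin k → Arr γ) (hf : ∀ j, (f j).rows = m ∧ (f j).cols = n) : Arr γ where
  rows := m
  cols := k * n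
  rows_pos := hm
  cols_pos := Nat.mul_pos hk hn
  entry i j :=
    (f ⟨(j : ℕ) / n, (Nat.div_lt_iff_lt_mul hn).mpr j.isLt⟩).entry
      ⟨(i : ℕ), by rw [(hf _).1]; exact i.isLt⟩
      ⟨(j : ℕ) % n, by rw [(hf _).2]; exact Nat.mod_lt _ hn⟩

theorem hcatArr_entry (m n : ℕ) {k : ℕ} (hk : 0 < k) (hm : 0 < m) (hn : 0 < n)
    (f : Fin k → Arr γ) (hf : ∀ j, (f j).rows = m ∧ (f j).cols = n)
    (i : Fin m) (j : Fin (k * n)) :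
    (hcatArr m n hk hm hn f hf).entry i j =
    (f ⟨(j : ℕ) / n, (Nat.div_lt_iff_lt_mul hn).mpr j.isLt⟩).entry
      ⟨(i : ℕ), by rw [(hf _).1]; exact i.isLt⟩
      ⟨(j : ℕ) % n, by rw [(hf _).2]; exact Nat.mod_lt _ hn⟩ := rfl

/-- Vertical concatenation of a uniform family of arrays. -/
def vcatArr (m n : ℕ) {k : ℕ} (hk : 0 < k) (hm : 0 < m) (hn : 0 < n)
    (f : Fin k → Arr γ) (hf : ∀ j, (f j).rows = m ∧ (f j).cols = n) : Arr γ where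
  rows := k * m
  cols := n
  rows_pos := Nat.mul_pos hk hm
  cols_pos := hn
  entry i j :=
    (f ⟨(i : ℕ) / m, (Nat.div_lt_iff_lt_mul hm).mpr i.isLt⟩).entry
      ⟨(i : ℕ) % m, by rw [(hf _).1]; exact Nat.mod_lt _ hm⟩
      ⟨(j : ℕ), by rw [(hf _).2]; exact j.isLt⟩

theorem vcatArr_entry (m n : ℕ) {k : ℕ} (hk : 0 < k) (hm : 0 < m) (hn : 0 < n)
    (f : Fin k → Arr γ) (hf : ∀ j, (f j).rows = m ∧ (f j).cols = n)
    (i : Fin (k * m)) (j : Fin n) :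
    (vcatArr m n hk hm hn f hf).entry i j =
    (f ⟨(i : ℕ) / m, (Nat.div_lt_iff_lt_mul hm).mpr i.isLt⟩).entry
      ⟨(i : ℕ) % m, by rw [(hf _).1]; exact Nat.mod_lt _ hm⟩
      ⟨(j : ℕ), by rw [(hf _).2]; exact j.isLt⟩ := rfl

end ArrAux
namespace ArrAux

open Arr

variable {σ γ : Type}

theorem hcat_eq (m n : ℕ) (hm : 0 < m) (hn : 0 < n) : ∀ {k : ℕ} (hk : 0 < k)
    (f : Fin k → Arr γ) (hf : ∀ j, (f j).rows = m ∧ (f j).cols = n),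
    catListO colCat (List.ofFn fun j => some (f j)) = some (hcatArr m n hk hm hn f hf)
  | 0, hk, _, _ => absurd hk (lt_irrefl 0)
  | 1, hk, f, hf => by
    simp only [List.ofFn_succ, List.ofFn_zero, catListO]
    refine congrArg some (ext2 ((hf _).1.trans ?_) ((hf _).2.trans ?_) ?_)
    · rfl
    · exact (one_mul n).symm
    intro i j hi hj
    erw [hcatArr_entry]
    have hjn : j < n := by rw [← (hf _).2]; exact hj
    exact entry_congr (congrArg f (Subsingleton.elim _ _)) rfl
      (Nat.mod_eq_of_lt hjn).symm
  | k+2, hk, f, hf => by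
    have ih := hcat_eq m n hm hn (k := k + 1) (Nat.succ_pos k)
      (fun i => f i.succ) (fun i => hf i.succ)
    rw [List.ofFn_succ, List.ofFn_succ (f := fun i : Fin (k+1) => some (f i.succ)),
      catListO, ← List.ofFn_succ (f := fun i : Fin (k+1) => some (f i.succ)), ih]
    simp only [Option.bind_some, Option.bind_some]
    rw [colCat]
    split_ifs with hrr
    case neg => exact absurd ((hf 0).1.trans rfl) hrr
    refine congrArg some (ext2 (hf 0).1 (by show (f 0).cols + (k+1)*n = (k+2)*n; rw [(hf 0).2]; ring) ?_)
    intro i j hi hj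
    have h0c : (f 0).cols = n := (hf 0).2
    dsimp only
    rcases lt_or_ge j ((f 0).cols) with hlt | hge
    · rw [dif_pos hlt]
      erw [hcatArr_entry]
      have hjn : j < n := h0c ▸ hlt
      exact entry_congr (congrArg f (Fin.ext (by simp [Nat.div_eq_of_lt hjn]))) rfl
        (Nat.mod_eq_of_lt hjn).symm
    · rw [dif_neg (not_lt.mpr hge)]
      erw [hcatArr_entry, hcatArr_entry]
      have hge' : n ≤ j := h0c ▸ hge
      refine entry_congr (congrArg f (Fin.ext ?_)) rfl ?_
      · show (j - (f 0).cols) / n + 1 = j / n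
        rw [h0c, ← Nat.div_eq_sub_div hn hge']
      · show (j - (f 0).cols) % n = j % n
        rw [h0c, ← Nat.mod_eq_sub_mod hge']

end ArrAux
namespace ArrAux

open Arr

variable {σ γ : Type}

theorem vcat_eq (m n : ℕ) (hm : 0 < m) (hn : 0 < n) : ∀ {k : ℕ} (hk : 0 < k)
    (f : Fin k → Arr γ) (hf : ∀ j, (f j).rows = m ∧ (f j).cols = n),
    catListO rowCat (List.ofFn fun j => some (f j)) = some (vcatArr m n hk hm hn f hf)
  | 0, hk, _, _ => absurd hk (lt_irrefl 0)
  | 1, hk, f, hf => by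
    simp only [List.ofFn_succ, List.ofFn_zero, catListO]
    refine congrArg some (ext2 ((hf _).1.trans ?_) ((hf _).2.trans ?_) ?_)
    · exact (one_mul m).symm
    · rfl
    intro i j hi hj
    erw [vcatArr_entry]
    have him : i < m := by rw [← (hf _).1]; exact hi
    exact entry_congr (congrArg f (Subsingleton.elim _ _))
      (Nat.mod_eq_of_lt him).symm rfl
  | k+2, hk, f, hf => by
    have ih := vcat_eq m n hm hn (k := k + 1) (Nat.succ_pos k)
      (fun i => f i.succ) (fun i => hf i.succ)
    rw [List.ofFn_succ, List.ofFn_succ (f := fun i : Fin (k+1) => some (f i.succ)),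
      catListO, ← List.ofFn_succ (f := fun i : Fin (k+1) => some (f i.succ)), ih]
    simp only [Option.bind_some, Option.bind_some]
    rw [rowCat]
    split_ifs with hcc
    case neg => exact absurd ((hf 0).2.trans rfl) hcc
    refine congrArg some (ext2 (by show (f 0).rows + (k+1)*m = (k+2)*m; rw [(hf 0).1]; ring) (hf 0).2 ?_)
    intro i j hi hj
    have h0r : (f 0).rows = m := (hf 0).1
    dsimp only
    rcases lt_or_ge i ((f 0).rows) with hlt | hge
    · rw [dif_pos hlt]
      erw [vcatArr_entry]
      have him : i < m := h0r ▸ hlt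
      exact entry_congr (congrArg f (Fin.ext (by simp [Nat.div_eq_of_lt him])))
        (Nat.mod_eq_of_lt him).symm rfl
    · rw [dif_neg (not_lt.mpr hge)]
      erw [vcatArr_entry, vcatArr_entry]
      have hge' : m ≤ i := h0r ▸ hge
      refine entry_congr (congrArg f (Fin.ext ?_)) ?_ rfl
      · show (i - (f 0).rows) / m + 1 = i / m
        rw [h0r, ← Nat.div_eq_sub_div hm hge']
      · show (i - (f 0).rows) % m = i % m
        rw [h0r, ← Nat.mod_eq_sub_mod hge']

end ArrAux
namespace ArrAux

open Arr

variable {σ γ : Type}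

theorem subCR_eq (g : σ → Arr γ) (m n : ℕ) (hg : ∀ x, (g x).rows = m ∧ (g x).cols = n)
    (hm : 0 < m) (hn : 0 < n) (U : Arr σ) :
    subCR g U = some (blow g m n hg hm hn U) := by
  have hlist : (List.ofFn fun i : Fin U.rows =>
      catListO colCat (List.ofFn fun j : Fin U.cols => some (g (U.entry i j)))) =
      List.ofFn fun i : Fin U.rows =>
        some (hcatArr m n U.cols_pos hm hn (fun j => g (U.entry i j)) (fun j => hg _)) := by
    congr 1
    funext i
    exact hcat_eq m n hm hn U.cols_pos _ _
  rw [subCR, hlist, vcat_eq m (U.cols * n) hm (Nat.mul_pos U.cols_pos hn) U.rows_pos _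
    (fun i => ⟨rfl, rfl⟩)]
  refine congrArg some (ext2 rfl rfl ?_)
  intro i j hi hj
  erw [vcatArr_entry, hcatArr_entry, blow_entry (hg := hg) (hm := hm) (hn := hn)]


theorem subRC_eq (g : σ → Arr γ) (m n : ℕ) (hg : ∀ x, (g x).rows = m ∧ (g x).cols = n)
    (hm : 0 < m) (hn : 0 < n) (U : Arr σ) :
    subRC g U = some (blow g m n hg hm hn U) := by
  have hlist : (List.ofFn fun j : Fin U.cols =>
      catListO rowCat (List.ofFn fun i : Fin U.rows => some (g (U.entry i j)))) =
      List.ofFn fun j : Fin U.cols =>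
        some (vcatArr m n U.rows_pos hm hn (fun i => g (U.entry i j)) (fun i => hg _)) := by
    congr 1
    funext j
    exact vcat_eq m n hm hn U.rows_pos _ _
  rw [subRC, hlist, hcat_eq (U.rows * m) n (Nat.mul_pos U.rows_pos hm) hn U.cols_pos _
    (fun j => ⟨rfl, rfl⟩)]
  refine congrArg some (ext2 rfl rfl ?_)
  intro i j hi hj
  erw [hcatArr_entry, vcatArr_entry, blow_entry (hg := hg) (hm := hm) (hn := hn)]


end ArrAux
namespace ArrAux

open Arr

variable {σ γ : Type}

theorem blow_colCat (g : σ → Arr γ) (m n : ℕ) (hg : ∀ x, (g x).rows = m ∧ (g x).cols = n)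
    (hm : 0 < m) (hn : 0 < n) {U V W : Arr σ} (hUV : colCat U V = some W) :
    colCat (blow g m n hg hm hn U) (blow g m n hg hm hn V)
      = some (blow g m n hg hm hn W) := by
  rw [colCat] at hUV
  split_ifs at hUV with hr
  injection hUV with hW
  subst hW
  rw [colCat, dif_pos (show (blow g m n hg hm hn U).rows = (blow g m n hg hm hn V).rows by
    show U.rows * m = V.rows * m; rw [hr])]
  refine congrArg some (ext2 rfl (show U.cols * n + V.cols * n = (U.cols + V.cols) * n by ring) ?_)
  intro i j hi hj
  erw [blow_entry]
  dsimp only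
  rcases lt_or_ge j (U.cols * n) with hlt | hge
  · simp only [dif_pos (show j < (blow g m n hg hm hn U).cols from hlt),
      dif_pos (show (j : ℕ) / n < U.cols from (Nat.div_lt_iff_lt_mul hn).mpr hlt)]
    erw [blow_entry]
    refine Eq.trans ?_ (entry_congr (congrArg g (dif_pos ((Nat.div_lt_iff_lt_mul hn).mpr hlt)).symm) (i := ⟨i % m, by rw [(hg _).1]; exact Nat.mod_lt _ hm⟩) (j := ⟨j % n, by rw [(hg _).2]; exact Nat.mod_lt _ hn⟩) rfl rfl) <;> rfl
  · simp only [dif_neg (show ¬ j < (blow g m n hg hm hn U).cols from not_lt.mpr hge),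
      dif_neg (show ¬ (j : ℕ) / n < U.cols from not_lt.mpr (Nat.le_div_iff_mul_le hn |>.mpr hge))]
    erw [blow_entry]
    refine Eq.trans ?_ (entry_congr (congrArg g (dif_neg (show ¬ (j : ℕ) / n < U.cols from not_lt.mpr (Nat.le_div_iff_mul_le hn |>.mpr hge))).symm) (i := ⟨i % m, by rw [(hg _).1]; exact Nat.mod_lt _ hm⟩) (j := ⟨j % n, by rw [(hg _).2]; exact Nat.mod_lt _ hn⟩) rfl rfl)
    refine entry_congr (congrArg g (entry_congr rfl rfl ?_)) rfl ?_
    · show (j - U.cols * n) / n = j / n - U.cols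
      rw [Nat.mul_comm, Nat.sub_mul_div]
    · show (j - U.cols * n) % n = j % n
      rw [Nat.mul_comm, Nat.sub_mul_mod (by rw [Nat.mul_comm]; exact hge)]

theorem blow_rowCat (g : σ → Arr γ) (m n : ℕ) (hg : ∀ x, (g x).rows = m ∧ (g x).cols = n)
    (hm : 0 < m) (hn : 0 < n) {U V W : Arr σ} (hUV : rowCat U V = some W) :
    rowCat (blow g m n hg hm hn U) (blow g m n hg hm hn V)
      = some (blow g m n hg hm hn W) := by
  rw [rowCat] at hUV
  split_ifs at hUV with hc
  injection hUV with hW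
  subst hW
  rw [rowCat, dif_pos (show (blow g m n hg hm hn U).cols = (blow g m n hg hm hn V).cols by
    show U.cols * n = V.cols * n; rw [hc])]
  refine congrArg some (ext2 (show U.rows * m + V.rows * m = (U.rows + V.rows) * m by ring) rfl ?_)
  intro i j hi hj
  erw [blow_entry]
  dsimp only
  rcases lt_or_ge i (U.rows * m) with hlt | hge
  · simp only [dif_pos (show i < (blow g m n hg hm hn U).rows from hlt),
      dif_pos (show (i : ℕ) / m < U.rows from (Nat.div_lt_iff_lt_mul hm).mpr hlt)]
    erw [blow_entry]
    refine Eq.trans ?_ (entry_congr (congrArg g (dif_pos ((Nat.div_lt_iff_lt_mul hm).mpr hlt)).symm) (i := ⟨i % m, by rw [(hg _).1]; exact Nat.mod_lt _ hm⟩) (j := ⟨j % n, by rw [(hg _).2]; exact Nat.mod_lt _ hn⟩) rfl rfl) <;> rfl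
  · simp only [dif_neg (show ¬ i < (blow g m n hg hm hn U).rows from not_lt.mpr hge),
      dif_neg (show ¬ (i : ℕ) / m < U.rows from not_lt.mpr (Nat.le_div_iff_mul_le hm |>.mpr hge))]
    erw [blow_entry]
    refine Eq.trans ?_ (entry_congr (congrArg g (dif_neg (show ¬ (i : ℕ) / m < U.rows from not_lt.mpr (Nat.le_div_iff_mul_le hm |>.mpr hge))).symm) (i := ⟨i % m, by rw [(hg _).1]; exact Nat.mod_lt _ hm⟩) (j := ⟨j % n, by rw [(hg _).2]; exact Nat.mod_lt _ hn⟩) rfl rfl)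
    refine entry_congr (congrArg g (entry_congr rfl ?_ rfl)) ?_ rfl
    · show (i - U.rows * m) / m = i / m - U.rows
      rw [Nat.mul_comm, Nat.sub_mul_div]
    · show (i - U.rows * m) % m = i % m
      rw [Nat.mul_comm, Nat.sub_mul_mod (by rw [Nat.mul_comm]; exact hge)]

end ArrAux
namespace ArrAux

open Arr

variable {σ γ : Type}

/-- A 1×1 array. -/
def cell (x : σ) : Arr σ := ⟨1, 1, one_pos, one_pos, fun _ _ => x⟩

theorem cell_of (U : Arr σ) (h1 : U.rows = 1) (h2 : U.cols = 1) :
    U = cell (U.entry ⟨0, U.rows_pos⟩ ⟨0, U.cols_pos⟩) := by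
  refine ext2 h1 h2 ?_
  intro i j hi hj
  exact entry_congr rfl (by omega) (by omega)

theorem blow_cell (g : σ → Arr γ) (m n : ℕ) (hg : ∀ x, (g x).rows = m ∧ (g x).cols = n)
    (hm : 0 < m) (hn : 0 < n) (x : σ) :
    blow g m n hg hm hn (cell x) = g x := by
  refine ext2 (show 1 * m = (g x).rows by rw [(hg x).1, one_mul])
    (show 1 * n = (g x).cols by rw [(hg x).2, one_mul]) ?_
  intro i j hi hj
  have hi' : i < m := by have : i < 1 * m := hi; omega
  have hj' : j < n := by have : j < 1 * n := hj; omega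
  erw [blow_entry]
  exact entry_congr rfl (Nat.mod_eq_of_lt hi') (Nat.mod_eq_of_lt hj')

def firstCol (U : Arr σ) : Arr σ :=
  ⟨U.rows, 1, U.rows_pos, one_pos, fun i _ => U.entry i ⟨0, U.cols_pos⟩⟩

def restCols (U : Arr σ) (h : 1 < U.cols) : Arr σ :=
  ⟨U.rows, U.cols - 1, U.rows_pos, by omega,
    fun i j => U.entry i ⟨(j : ℕ) + 1, by have := j.isLt; omega⟩⟩

theorem colCat_split (U : Arr σ) (h : 1 < U.cols) :
    colCat (firstCol U) (restCols U h) = some U := by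
  rw [colCat, dif_pos (show (firstCol U).rows = (restCols U h).rows from rfl)]
  refine congrArg some (ext2 rfl (show 1 + (U.cols - 1) = U.cols by omega) ?_)
  intro i j hi hj
  dsimp only
  split_ifs with hj1
  · show U.entry ⟨i, hi⟩ ⟨0, U.cols_pos⟩ = _
    have hj1' : j < 1 := hj1
    exact entry_congr rfl rfl (show 0 = j by omega)
  · have h1j : 1 ≤ j := not_lt.mp hj1
    show U.entry ⟨i, hi⟩ ⟨j - 1 + 1, _⟩ = _
    exact entry_congr rfl rfl (show j - 1 + 1 = j by omega)

def firstRow (U : Arr σ) : Arr σ :=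
  ⟨1, U.cols, one_pos, U.cols_pos, fun _ j => U.entry ⟨0, U.rows_pos⟩ j⟩

def restRows (U : Arr σ) (h : 1 < U.rows) : Arr σ :=
  ⟨U.rows - 1, U.cols, by omega, U.cols_pos,
    fun i j => U.entry ⟨(i : ℕ) + 1, by have := i.isLt; omega⟩ j⟩

theorem rowCat_split (U : Arr σ) (h : 1 < U.rows) :
    rowCat (firstRow U) (restRows U h) = some U := by
  rw [rowCat, dif_pos (show (firstRow U).cols = (restRows U h).cols from rfl)]
  refine congrArg some (ext2 (show 1 + (U.rows - 1) = U.rows by omega) rfl ?_)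
  intro i j hi hj
  dsimp only
  split_ifs with hi1
  · show U.entry ⟨0, U.rows_pos⟩ ⟨j, hj⟩ = _
    have hi1' : i < 1 := hi1
    exact entry_congr rfl (show 0 = i by omega) rfl
  · have h1i : 1 ≤ i := not_lt.mp hi1
    show U.entry ⟨i - 1 + 1, _⟩ ⟨j, hj⟩ = _
    exact entry_congr rfl (show i - 1 + 1 = i by omega) rfl

theorem colCat_rows {A B C : Arr γ} (h : colCat A B = some C) : A.rows = B.rows := by
  rw [colCat] at h
  split_ifs at h with hr
  exact hr

theorem rowCat_cols {A B C : Arr γ} (h : rowCat A B = some C) : A.cols = B.cols := by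
  rw [rowCat] at h
  split_ifs at h with hc
  exact hc

end ArrAux

open ArrAux

/-- `h` is a two-dimensional morphism iff `h = g_{⊖,⦶} = g_{⦶,⊖}`
for some uniform substitution `g`. -/
theorem stmt1 {σ γ : Type} [Fintype σ] [Fintype γ] (h : Arr σ → Arr γ) :
    IsMorphism h ↔
      ∃ g : σ → Arr γ, Uniform g ∧
        (∀ U : Arr σ, subRC g U = some (h U)) ∧
        (∀ U : Arr σ, subCR g U = some (h U)) := by
  constructor
  · intro hmor
    rcases isEmpty_or_nonempty σ with hE | hNE
    · refine ⟨fun x => hE.elim x, ⟨1, 1, fun x => hE.elim x⟩, fun U => ?_, fun U => ?_⟩ <;>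
        exact hE.elim (U.entry ⟨0, U.rows_pos⟩ ⟨0, U.cols_pos⟩)
    · obtain ⟨x₀⟩ := hNE
      set g : σ → Arr γ := fun x => h (cell x) with hgdef
      have hdim : ∀ x : σ, (g x).rows = (g x₀).rows ∧ (g x).cols = (g x₀).cols := by
        intro x
        constructor
        · obtain ⟨C, hC⟩ : ∃ C, colCat (cell x) (cell x₀) = some C :=
            ⟨_, by rw [colCat, dif_pos (show (cell x).rows = (cell x₀).rows from rfl)]⟩
          have hmc := hmor.1 (cell x) (cell x₀)
          rw [hC, Option.map_some] at hmc
          exact colCat_rows hmc.symm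
        · obtain ⟨C, hC⟩ : ∃ C, rowCat (cell x) (cell x₀) = some C :=
            ⟨_, by rw [rowCat, dif_pos (show (cell x).cols = (cell x₀).cols from rfl)]⟩
          have hmc := hmor.2 (cell x) (cell x₀)
          rw [hC, Option.map_some] at hmc
          exact rowCat_cols hmc.symm
      set m := (g x₀).rows with hmdef
      set n := (g x₀).cols with hndef
      have hm0 : 0 < m := (g x₀).rows_pos
      have hn0 : 0 < n := (g x₀).cols_pos
      have main : ∀ N (U : Arr σ), U.rows + U.cols ≤ N →
          h U = blow g m n hdim hm0 hn0 U := by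
        intro N
        induction N with
        | zero =>
          intro U hU
          exact absurd hU (by have := U.rows_pos; have := U.cols_pos; omega)
        | succ N ih =>
          intro U hU
          by_cases hcge : 1 < U.cols
          · have hsplit := colCat_split U hcge
            have hmc := hmor.1 (firstCol U) (restCols U hcge)
            rw [hsplit, Option.map_some] at hmc
            rw [ih (firstCol U) (by show U.rows + 1 ≤ N; omega),
              ih (restCols U hcge) (by show U.rows + (U.cols - 1) ≤ N; omega),
              blow_colCat g m n hdim hm0 hn0 hsplit] at hmc
            exact Option.some.inj hmc
          · by_cases hrge : 1 < U.rows
            · have hsplit := rowCat_split U hrge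
              have hmc := hmor.2 (firstRow U) (restRows U hrge)
              rw [hsplit, Option.map_some] at hmc
              rw [ih (firstRow U) (by show 1 + U.cols ≤ N; omega),
                ih (restRows U hrge) (by show (U.rows - 1) + U.cols ≤ N; omega),
                blow_rowCat g m n hdim hm0 hn0 hsplit] at hmc
              exact Option.some.inj hmc
            · have h1r : U.rows = 1 := by have := U.rows_pos; omega
              have h1c : U.cols = 1 := by have := U.cols_pos; omega
              rw [cell_of U h1r h1c, blow_cell]
      refine ⟨g, ⟨m, n, hdim⟩, fun U => ?_, fun U => ?_⟩
      · rw [subRC_eq g m n hdim hm0 hn0 U, main (U.rows + U.cols) U le_rfl]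
      · rw [subCR_eq g m n hdim hm0 hn0 U, main (U.rows + U.cols) U le_rfl]
  · rintro ⟨g, ⟨m, n, hdim⟩, hRC, hCR⟩
    constructor
    · intro V W
      have x := V.entry ⟨0, V.rows_pos⟩ ⟨0, V.cols_pos⟩
      have hm0 : 0 < m := (hdim x).1 ▸ (g x).rows_pos
      have hn0 : 0 < n := (hdim x).2 ▸ (g x).cols_pos
      have hb : ∀ U : Arr σ, h U = blow g m n hdim hm0 hn0 U := by
        intro U
        have h1 := hCR U
        rw [subCR_eq g m n hdim hm0 hn0 U] at h1
        exact (Option.some.inj h1).symm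
      by_cases hr : V.rows = W.rows
      · obtain ⟨C, hC⟩ : ∃ C, colCat V W = some C := ⟨_, by rw [colCat, dif_pos hr]⟩
        rw [hC, Option.map_some, hb V, hb W, hb C,
          blow_colCat g m n hdim hm0 hn0 hC]
      · have hL : colCat V W = none := by rw [colCat]; exact dif_neg hr
        rw [hL, Option.map_none, hb V, hb W, colCat]
        symm
        exact dif_neg fun hEq => hr (Nat.eq_of_mul_eq_mul_right hm0 hEq)
    · intro V W
      have x := V.entry ⟨0, V.rows_pos⟩ ⟨0, V.cols_pos⟩
      have hm0 : 0 < m := (hdim x).1 ▸ (g x).rows_pos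
      have hn0 : 0 < n := (hdim x).2 ▸ (g x).cols_pos
      have hb : ∀ U : Arr σ, h U = blow g m n hdim hm0 hn0 U := by
        intro U
        have h1 := hCR U
        rw [subCR_eq g m n hdim hm0 hn0 U] at h1
        exact (Option.some.inj h1).symm
      by_cases hc : V.cols = W.cols
      · obtain ⟨C, hC⟩ : ∃ C, rowCat V W = some C := ⟨_, by rw [rowCat, dif_pos hc]⟩
        rw [hC, Option.map_some, hb V, hb W, hb C,
          blow_rowCat g m n hdim hm0 hn0 hC]
      · have hL : rowCat V W = none := by rw [rowCat]; exact dif_neg hc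
        rw [hL, Option.map_none, hb V, hb W, rowCat]
        symm
        exact dif_neg fun hEq => hc (Nat.eq_of_mul_eq_mul_right hn0 hEq)
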